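/- If U = {0, α, β} with distinct α, β ∈ (0, π), then the real part of the origami set satisfies M(U) ∩ ℝ = ℤ. -/

import Mathlib

open Real Complex Set

/-- The `θ`-projection of `z`: the unique real `x` with `z ∈ x + ℝ·exp(iθ)`
(for `θ ∈ (0,π)`); explicitly `x = Re z − Im z · cos θ / sin θ`. -/
noncomputable def proj (θ : ℝ) (z : ℂ) : ℝ := z.re - z.im * Real.cos θ / Real.sin θ

/-- `inter α β r s` is the (unique, for distinct `α β ∈ (0,π)`) complex number
with `α`-projection `r` and `β`-projection `s`, i.e. `⟦r,s⟧_{α,β}`. -/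
noncomputable def inter (α β r s : ℝ) : ℂ :=
  Classical.epsilon fun z : ℂ => proj α z = r ∧ proj β z = s

/-- The line through `z` with slope (angle) `θ`. -/
def lineThru (z : ℂ) (θ : ℝ) : Set ℂ := {w | ∃ t : ℝ, w = z + t * Complex.exp (θ * Complex.I)}

/-- The recursively defined stages of the origami set. -/
def origamiStep (U : Set ℝ) : ℕ → Set ℂ
  | 0 => {0, 1}
  | k + 1 => {w | ∃ z ∈ origamiStep U k, ∃ z' ∈ origamiStep U k,
      ∃ γ ∈ U, ∃ γ' ∈ U, γ ≠ γ' ∧ w ∈ lineThru z γ ∧ w ∈ lineThru z' γ'}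

/-- The origami set `M(U)`. -/
def origami (U : Set ℝ) : Set ℂ := ⋃ k, origamiStep U k

/-- The real part `M_ℝ = M(U) ∩ ℝ`, viewed as a set of reals. -/
def origamiR (U : Set ℝ) : Set ℝ := {x : ℝ | (x : ℂ) ∈ origami U}

/- ### Auxiliary machinery -/

lemma mem_lineThru_iff {θ : ℝ} (hθ : Real.sin θ ≠ 0) {z w : ℂ} :
    w ∈ lineThru z θ ↔ proj θ w = proj θ z := by
  constructor
  · rintro ⟨t, rfl⟩
    simp only [proj, Complex.add_re, Complex.add_im, Complex.mul_re, Complex.mul_im,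
      Complex.ofReal_re, Complex.ofReal_im, Complex.exp_ofReal_mul_I_re,
      Complex.exp_ofReal_mul_I_im]
    field_simp
    ring
  · intro h
    refine ⟨(w.im - z.im) / Real.sin θ, ?_⟩
    apply Complex.ext
    · simp only [proj] at h
      simp only [Complex.add_re, Complex.mul_re, Complex.ofReal_re, Complex.ofReal_im,
        Complex.exp_ofReal_mul_I_re, Complex.exp_ofReal_mul_I_im]
      field_simp at h ⊢
      linarith
    · simp only [Complex.add_im, Complex.mul_im, Complex.ofReal_re, Complex.ofReal_im,
        Complex.exp_ofReal_mul_I_re, Complex.exp_ofReal_mul_I_im]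
      field_simp
      ring

lemma mem_lineThru_zero_iff {z w : ℂ} : w ∈ lineThru z 0 ↔ w.im = z.im := by
  constructor
  · rintro ⟨t, rfl⟩
    simp
  · intro h
    refine ⟨w.re - z.re, ?_⟩
    apply Complex.ext <;> simp [h]

/-- The point with `α`-projection `r` and `β`-projection `s`. -/
noncomputable def pt (α β r s : ℝ) : ℂ :=
  ⟨r + (r - s) / (Real.cos β / Real.sin β - Real.cos α / Real.sin α) * (Real.cos α / Real.sin α),
   (r - s) / (Real.cos β / Real.sin β - Real.cos α / Real.sin α)⟩

lemma cot_ne {α β : ℝ} (hα : α ∈ Set.Ioo 0 Real.pi) (hβ : β ∈ Set.Ioo 0 Real.pi)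
    (hαβ : α ≠ β) : Real.cos β / Real.sin β - Real.cos α / Real.sin α ≠ 0 := by
  have hsa : Real.sin α ≠ 0 := ne_of_gt (Real.sin_pos_of_pos_of_lt_pi hα.1 hα.2)
  have hsb : Real.sin β ≠ 0 := ne_of_gt (Real.sin_pos_of_pos_of_lt_pi hβ.1 hβ.2)
  intro h
  have h2 : Real.cos β * Real.sin α - Real.cos α * Real.sin β = 0 := by
    field_simp at h
    linarith
  have h3 : Real.sin (α - β) = 0 := by
    rw [Real.sin_sub]; linarith
  have h4 : α - β = 0 := by
    rw [Real.sin_eq_zero_iff_of_lt_of_lt (by linarith [hα.1, hβ.2] : -Real.pi < α - β)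
      (by linarith [hα.2, hβ.1] : α - β < Real.pi)] at h3
    exact h3
  exact hαβ (by linarith)

lemma proj_pt_fst {α β : ℝ} (r s : ℝ) : proj α (pt α β r s) = r := by
  simp [proj, pt]; ring

lemma proj_pt_snd {α β : ℝ} (hα : α ∈ Set.Ioo 0 Real.pi) (hβ : β ∈ Set.Ioo 0 Real.pi)
    (hαβ : α ≠ β) (r s : ℝ) : proj β (pt α β r s) = s := by
  have h := cot_ne hα hβ hαβ
  simp only [proj, pt]
  rw [mul_div_assoc]
  generalize Real.cos α / Real.sin α = c at *
  generalize Real.cos β / Real.sin β = d at *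
  field_simp
  ring

lemma pt_self {α β r : ℝ} : pt α β r r = (r : ℂ) := by
  apply Complex.ext <;> simp [pt]

lemma proj_sub_proj (α β : ℝ) (z : ℂ) :
    proj α z - proj β z = z.im * (Real.cos β / Real.sin β - Real.cos α / Real.sin α) := by
  simp only [proj]; ring

lemma pt_im {α β r s : ℝ} :
    (pt α β r s).im = (r - s) / (Real.cos β / Real.sin β - Real.cos α / Real.sin α) := rfl

lemma self_mem_lineThru (z : ℂ) (θ : ℝ) : z ∈ lineThru z θ := ⟨0, by simp⟩

lemma origamiStep_mono {U : Set ℝ} (hU : ∃ γ ∈ U, ∃ γ' ∈ U, γ ≠ γ') {k l : ℕ} (hkl : k ≤ l) :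
    origamiStep U k ⊆ origamiStep U l := by
  induction l with
  | zero => simp_all
  | succ l ih =>
    rcases Nat.lt_or_ge k (l+1) with h | h
    · intro z hz
      obtain ⟨γ, hγ, γ', hγ', hne⟩ := hU
      exact ⟨z, ih (Nat.lt_succ_iff.mp h) hz, z, ih (Nat.lt_succ_iff.mp h) hz, γ, hγ, γ', hγ',
        hne, self_mem_lineThru z γ, self_mem_lineThru z γ'⟩
    · have : k = l + 1 := le_antisymm hkl h
      subst this; exact fun z hz => hz

lemma origami_closure {U : Set ℝ} {z z' w : ℂ} {γ γ' : ℝ}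
    (hz : z ∈ origami U) (hz' : z' ∈ origami U) (hγ : γ ∈ U) (hγ' : γ' ∈ U) (hne : γ ≠ γ')
    (hw : w ∈ lineThru z γ) (hw' : w ∈ lineThru z' γ') : w ∈ origami U := by
  obtain ⟨_, ⟨k, rfl⟩, hzk⟩ := hz
  obtain ⟨_, ⟨k', rfl⟩, hzk'⟩ := hz'
  have hU : ∃ a ∈ U, ∃ b ∈ U, a ≠ b := ⟨γ, hγ, γ', hγ', hne⟩
  refine mem_iUnion.mpr ⟨max k k' + 1, ?_⟩
  exact ⟨z, origamiStep_mono hU (le_max_left k k') hzk,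
    z', origamiStep_mono hU (le_max_right k k') hzk', γ, hγ, γ', hγ', hne, hw, hw'⟩

section ThreeSlopes

variable {α β : ℝ}


/-- Invariant: every point of the origami set has integer `α`- and `β`-projections. -/
lemma origami_invariant (hα : α ∈ Set.Ioo 0 Real.pi) (hβ : β ∈ Set.Ioo 0 Real.pi) (hαβ : α ≠ β) : ∀ k, ∀ w ∈ origamiStep ({0, α, β} : Set ℝ) k,
    (∃ m : ℤ, proj α w = m) ∧ (∃ n : ℤ, proj β w = n) := by
  have hsa : Real.sin α ≠ 0 := ne_of_gt (Real.sin_pos_of_pos_of_lt_pi hα.1 hα.2)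
  have hsb : Real.sin β ≠ 0 := ne_of_gt (Real.sin_pos_of_pos_of_lt_pi hβ.1 hβ.2)
  intro k
  induction k with
  | zero =>
    rintro w (rfl | rfl)
    · exact ⟨⟨0, by simp [proj]⟩, ⟨0, by simp [proj]⟩⟩
    · exact ⟨⟨1, by simp [proj]⟩, ⟨1, by simp [proj]⟩⟩
  | succ k ih =>
    rintro w ⟨z, hz, z', hz', γ, hγ, γ', hγ', hne, hw, hw'⟩
    obtain ⟨⟨m, hm⟩, ⟨n, hn⟩⟩ := ih z hz
    obtain ⟨⟨m', hm'⟩, ⟨n', hn'⟩⟩ := ih z' hz'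
    have constraint : ∀ (δ : ℝ), δ ∈ ({0, α, β} : Set ℝ) → ∀ u : ℂ, w ∈ lineThru u δ →
        (δ = 0 ∧ proj α w - proj β w = proj α u - proj β u) ∨
        (δ = α ∧ proj α w = proj α u) ∨ (δ = β ∧ proj β w = proj β u) := by
      rintro δ (rfl | rfl | rfl) u hu
      · left
        refine ⟨rfl, ?_⟩
        have him : w.im = u.im := mem_lineThru_zero_iff.mp hu
        rw [proj_sub_proj, proj_sub_proj, him]
      · right; left
        exact ⟨rfl, (mem_lineThru_iff hsa).mp hu⟩
      · right; right
        exact ⟨rfl, (mem_lineThru_iff hsb).mp hu⟩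
    have c1 := constraint γ hγ z hw
    have c2 := constraint γ' hγ' z' hw'
    rw [hm, hn] at c1; rw [hm', hn'] at c2
    rcases c1 with ⟨e1, h1⟩ | ⟨e1, h1⟩ | ⟨e1, h1⟩ <;>
      rcases c2 with ⟨e2, h2⟩ | ⟨e2, h2⟩ | ⟨e2, h2⟩
    · exact absurd (e1.trans e2.symm) hne
    · exact ⟨⟨m', h2⟩, ⟨m' - m + n, by push_cast; linarith⟩⟩
    · exact ⟨⟨m - n + n', by push_cast; linarith⟩, ⟨n', h2⟩⟩
    · exact ⟨⟨m, h1⟩, ⟨m - m' + n', by push_cast; linarith⟩⟩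
    · exact absurd (e1.trans e2.symm) hne
    · exact ⟨⟨m, h1⟩, ⟨n', h2⟩⟩
    · exact ⟨⟨m' - n' + n, by push_cast; linarith⟩, ⟨n, h1⟩⟩
    · exact ⟨⟨m', h2⟩, ⟨n, h1⟩⟩
    · exact absurd (e1.trans e2.symm) hne

/-- Op 1: intersecting the `α`-line through `pt r s` with the `β`-line through `pt r' s'`. -/
lemma op1 (hα : α ∈ Set.Ioo 0 Real.pi) (hβ : β ∈ Set.Ioo 0 Real.pi) (hαβ : α ≠ β) {r s r' s' : ℝ} (h : pt α β r s ∈ origami {0, α, β})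
    (h' : pt α β r' s' ∈ origami {0, α, β}) : pt α β r s' ∈ origami {0, α, β} := by
  have hsa : Real.sin α ≠ 0 := ne_of_gt (Real.sin_pos_of_pos_of_lt_pi hα.1 hα.2)
  have hsb : Real.sin β ≠ 0 := ne_of_gt (Real.sin_pos_of_pos_of_lt_pi hβ.1 hβ.2)
  refine origami_closure h h' (by simp : α ∈ ({0, α, β} : Set ℝ))
    (by simp : β ∈ ({0, α, β} : Set ℝ)) hαβ ?_ ?_
  · exact (mem_lineThru_iff hsa).mpr (by rw [proj_pt_fst, proj_pt_fst])
  · exact (mem_lineThru_iff hsb).mpr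
      (by rw [proj_pt_snd hα hβ hαβ, proj_pt_snd hα hβ hαβ])

/-- Op 2: intersecting the `α`-line through `pt r s` with the horizontal line
through `pt r' s'`. -/
lemma op2 (hα : α ∈ Set.Ioo 0 Real.pi) (hβ : β ∈ Set.Ioo 0 Real.pi) (hαβ : α ≠ β) {r s r' s' : ℝ} (h : pt α β r s ∈ origami {0, α, β})
    (h' : pt α β r' s' ∈ origami {0, α, β}) :
    pt α β r (r - r' + s') ∈ origami {0, α, β} := by
  have hsa : Real.sin α ≠ 0 := ne_of_gt (Real.sin_pos_of_pos_of_lt_pi hα.1 hα.2)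
  refine origami_closure h h' (by simp : α ∈ ({0, α, β} : Set ℝ))
    (by simp : (0:ℝ) ∈ ({0, α, β} : Set ℝ)) (ne_of_gt hα.1) ?_ ?_
  · exact (mem_lineThru_iff hsa).mpr (by rw [proj_pt_fst, proj_pt_fst])
  · refine mem_lineThru_zero_iff.mpr ?_
    rw [pt_im, pt_im]
    ring_nf

/-- Op 3: intersecting the `β`-line through `pt r s` with the horizontal line
through `pt r' s'`. -/
lemma op3 (hα : α ∈ Set.Ioo 0 Real.pi) (hβ : β ∈ Set.Ioo 0 Real.pi) (hαβ : α ≠ β) {r s r' s' : ℝ} (h : pt α β r s ∈ origami {0, α, β})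
    (h' : pt α β r' s' ∈ origami {0, α, β}) :
    pt α β (s + r' - s') s ∈ origami {0, α, β} := by
  have hsb : Real.sin β ≠ 0 := ne_of_gt (Real.sin_pos_of_pos_of_lt_pi hβ.1 hβ.2)
  refine origami_closure h h' (by simp : β ∈ ({0, α, β} : Set ℝ))
    (by simp : (0:ℝ) ∈ ({0, α, β} : Set ℝ)) (ne_of_gt hβ.1) ?_ ?_
  · exact (mem_lineThru_iff hsb).mpr
      (by rw [proj_pt_snd hα hβ hαβ, proj_pt_snd hα hβ hαβ])
  · refine mem_lineThru_zero_iff.mpr ?_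
    rw [pt_im, pt_im]
    ring_nf

/-- All integer lattice points on the diagonal (and a companion) are reachable. -/
lemma origami_gen (hα : α ∈ Set.Ioo 0 Real.pi) (hβ : β ∈ Set.Ioo 0 Real.pi) (hαβ : α ≠ β) : ∀ n : ℤ, pt α β n n ∈ origami {0, α, β} ∧
    pt α β (n + 1) n ∈ origami {0, α, β} := by
  have h0 : pt α β 0 0 ∈ origami {0, α, β} := by
    rw [pt_self]
    exact mem_iUnion.mpr ⟨0, by norm_num [origamiStep]⟩
  have h1 : pt α β 1 1 ∈ origami {0, α, β} := by
    rw [pt_self]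
    exact mem_iUnion.mpr ⟨0, by norm_num [origamiStep]⟩
  intro n
  induction n using Int.induction_on with
  | zero =>
    refine ⟨by exact_mod_cast h0, ?_⟩
    have := op1 hα hβ hαβ h1 h0
    push_cast
    convert this using 2 <;> norm_num
  | succ n ih =>
    obtain ⟨hnn, hn1⟩ := ih
    push_cast at hnn hn1 ⊢
    have ha : pt α β (n + 1) (n + 1) ∈ origami {0, α, β} := by
      have := op2 hα hβ hαβ hn1 hnn
      rwa [show ((n:ℝ) + 1) - n + n = (n:ℝ) + 1 by ring] at this
    have hb : pt α β ((n : ℝ) + 1 + 1) ((n : ℝ) + 1) ∈ origami {0, α, β} := by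
      have := op3 hα hβ hαβ ha hn1
      rwa [show ((n:ℝ) + 1) + ((n:ℝ) + 1) - n = (n:ℝ) + 1 + 1 by ring] at this
    exact ⟨ha, hb⟩
  | pred n ih =>
    obtain ⟨hnn, hn1⟩ := ih
    push_cast at hnn hn1 ⊢
    have ha : pt α β (-(n:ℝ)) (-(n:ℝ) - 1) ∈ origami {0, α, β} := by
      have := op2 hα hβ hαβ hnn hn1
      rwa [show (-(n:ℝ)) - (-(n:ℝ) + 1) + (-(n:ℝ)) = -(n:ℝ) - 1 by ring] at this
    have hb : pt α β (-(n:ℝ) - 1) (-(n:ℝ) - 1) ∈ origami {0, α, β} := by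
      have := op3 hα hβ hαβ ha hnn
      rwa [show (-(n:ℝ) - 1) + (-(n:ℝ)) - (-(n:ℝ)) = -(n:ℝ) - 1 by ring] at this
    refine ⟨hb, ?_⟩
    rw [show -(n:ℝ) - 1 + 1 = -(n:ℝ) by ring]; exact ha

end ThreeSlopes

theorem origamiR_three_slopes (α β : ℝ) (hα : α ∈ Set.Ioo 0 Real.pi)
    (hβ : β ∈ Set.Ioo 0 Real.pi) (hαβ : α ≠ β) :
    origamiR {0, α, β} = Set.range (fun n : ℤ => (n : ℝ)) := by
  ext x
  simp only [Set.mem_range]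
  constructor
  · intro hx
    obtain ⟨k, hk⟩ := mem_iUnion.mp hx
    obtain ⟨⟨m, hm⟩, -⟩ := origami_invariant hα hβ hαβ k (x : ℂ) hk
    have : proj α (x : ℂ) = x := by simp [proj]
    exact ⟨m, by rw [← hm, this]⟩
  · rintro ⟨n, rfl⟩
    have := (origami_gen hα hβ hαβ n).1
    rw [pt_self] at this
    exact this
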